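/- arXiv:1706.04182 — 2 statements merged into one kernel-verified Lean document; each statement's English description precedes it below -/
import Mathlib

section
/- Let $M$ follow the non-central chi-squared distribution $\chi^2_p(\lambda)$ with c.d.f. $F_M$. Then as $a \downarrow 0$, the conditional expectation satisfies $E(M \mid M < a) \sim pa/(p+2)$. -/
open MeasureTheory Filter

/-- The p.d.f. of the chi-squared distribution with (real) degrees of freedom `d`. -/
noncomputable def chiSqPDF (d : ℝ) (y : ℝ) : ℝ :=
  y ^ (d/2 - 1) * Real.exp (-y/2) / (2 ^ (d/2) * Real.Gamma (d/2))

/-- The p.d.f. of the non-central chi-squared distribution `χ²_p(lam)`, via the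
Poisson mixture representation. -/
noncomputable def ncChiSqPDF (p : ℕ) (lam : ℝ) (y : ℝ) : ℝ :=
  ∑' k : ℕ, Real.exp (-lam/2) * (lam/2) ^ k / (Nat.factorial k) * chiSqPDF ((p : ℝ) + 2 * k) y

/-- The c.d.f. of the non-central chi-squared distribution `χ²_p(lam)`. -/
noncomputable def ncChiSqCDF (p : ℕ) (lam : ℝ) (a : ℝ) : ℝ :=
  ∫ y in (0:ℝ)..a, ncChiSqPDF p lam y

/-- `E(M ∣ M < a) = (∫_0^a y dF_M(y)) / F_M(a)` for `M ~ χ²_p(lam)`. -/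
noncomputable def ncChiSqCondExp (p : ℕ) (lam : ℝ) (a : ℝ) : ℝ :=
  (∫ y in (0:ℝ)..a, y * ncChiSqPDF p lam y) / ncChiSqCDF p lam a

noncomputable def gAux (p : ℕ) (lam : ℝ) (y : ℝ) : ℝ :=
  ∑' k : ℕ, Real.exp (-lam/2) * (lam/2) ^ k / (Nat.factorial k) *
    (y ^ k * Real.exp (-y/2) / (2 ^ (((p:ℝ) + 2*k)/2) * Real.Gamma (((p:ℝ) + 2*k)/2)))


lemma gamma_fact_le (x : ℝ) (hx : 1/2 ≤ x) (k : ℕ) :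
    Real.Gamma x * (Nat.factorial k) ≤ 2 ^ k * Real.Gamma (x + k) := by
  have hx0 : 0 < x := by linarith
  induction k with
  | zero => simp
  | succ n ih =>
    have h1 : Real.Gamma (x + (n+1 : ℕ)) = (x + n) * Real.Gamma (x + n) := by
      have h : (x + ((n:ℕ)+1 : ℕ) : ℝ) = (x + n) + 1 := by push_cast; ring
      rw [h, Real.Gamma_add_one (by positivity)]
    have h3 : (0:ℝ) < Real.Gamma (x + n) := Real.Gamma_pos_of_pos (by positivity)
    rw [h1, Nat.factorial_succ]
    push_cast
    calc Real.Gamma x * (((n:ℝ) + 1) * Nat.factorial n)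
        = ((n:ℝ)+1) * (Real.Gamma x * Nat.factorial n) := by ring
      _ ≤ ((n:ℝ)+1) * (2 ^ n * Real.Gamma (x + n)) := by
          exact mul_le_mul_of_nonneg_left ih (by positivity)
      _ ≤ (2*(x+(n:ℝ))) * (2 ^ n * Real.Gamma (x + n)) := by
          exact mul_le_mul_of_nonneg_right (by linarith) (by positivity)
      _ = 2 ^ (n+1) * ((x + n) * Real.Gamma (x + n)) := by ring


lemma half_cast (p : ℕ) (k : ℕ) : ((p:ℝ) + 2*k)/2 = (p:ℝ)/2 + k := by ring

lemma Ck_lb (p : ℕ) (hp : 1 ≤ p) (k : ℕ) :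
    2 ^ ((p:ℝ)/2) * Real.Gamma ((p:ℝ)/2) * (Nat.factorial k)
      ≤ 2 ^ (((p:ℝ) + 2*k)/2) * Real.Gamma (((p:ℝ) + 2*k)/2) := by
  have hp2 : (1:ℝ)/2 ≤ (p:ℝ)/2 := by
    have : (1:ℝ) ≤ (p:ℝ) := by exact_mod_cast hp
    linarith
  rw [half_cast, Real.rpow_add (by norm_num) ((p:ℝ)/2) (k:ℝ), Real.rpow_natCast]
  calc 2 ^ ((p:ℝ)/2) * Real.Gamma ((p:ℝ)/2) * (Nat.factorial k)
      = 2 ^ ((p:ℝ)/2) * (Real.Gamma ((p:ℝ)/2) * (Nat.factorial k)) := by ring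
    _ ≤ 2 ^ ((p:ℝ)/2) * (2^k * Real.Gamma ((p:ℝ)/2 + k)) := by
        exact mul_le_mul_of_nonneg_left (gamma_fact_le _ hp2 k) (by positivity)
    _ = 2 ^ ((p:ℝ)/2) * 2^k * Real.Gamma ((p:ℝ)/2 + k) := by ring

lemma Ck_pos (p : ℕ) (hp : 1 ≤ p) (k : ℕ) :
    0 < 2 ^ (((p:ℝ) + 2*k)/2) * Real.Gamma (((p:ℝ) + 2*k)/2) := by
  have h1 : (0:ℝ) < ((p:ℝ) + 2*k)/2 := by
    have : (1:ℝ) ≤ (p:ℝ) := by exact_mod_cast hp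
    positivity
  have := Real.Gamma_pos_of_pos h1
  positivity

lemma gAux_bound (p : ℕ) (hp : 1 ≤ p) (lam : ℝ) (hlam : 0 ≤ lam) (k : ℕ) (y : ℝ)
    (hy : y ∈ Set.Icc (0:ℝ) 1) :
    ‖Real.exp (-lam/2) * (lam/2) ^ k / (Nat.factorial k) *
      (y ^ k * Real.exp (-y/2) / (2 ^ (((p:ℝ) + 2*k)/2) * Real.Gamma (((p:ℝ) + 2*k)/2)))‖
    ≤ Real.exp (-lam/2) / (2 ^ ((p:ℝ)/2) * Real.Gamma ((p:ℝ)/2)) * ((lam/2) ^ k / (Nat.factorial k)) := by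
  obtain ⟨hy0, hy1⟩ := hy
  have hC := Ck_pos p hp k
  have hG : (0:ℝ) < Real.Gamma ((p:ℝ)/2) := Real.Gamma_pos_of_pos (by
    have : (1:ℝ) ≤ (p:ℝ) := by exact_mod_cast hp
    positivity)
  have hfac : (1:ℝ) ≤ Nat.factorial k := by exact_mod_cast Nat.one_le_iff_ne_zero.mpr (Nat.factorial_ne_zero k)
  rw [Real.norm_eq_abs, abs_of_nonneg (by positivity)]
  have hyk : y ^ k ≤ 1 := pow_le_one₀ hy0 hy1
  have hexp : Real.exp (-y/2) ≤ 1 := by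
    rw [Real.exp_le_one_iff]; linarith
  have hnum : y ^ k * Real.exp (-y/2) ≤ 1 := by
    calc y ^ k * Real.exp (-y/2) ≤ 1 * 1 := mul_le_mul hyk hexp (by positivity) (by norm_num)
      _ = 1 := by norm_num
  have hden : 2 ^ ((p:ℝ)/2) * Real.Gamma ((p:ℝ)/2) * 1
      ≤ 2 ^ (((p:ℝ) + 2*k)/2) * Real.Gamma (((p:ℝ) + 2*k)/2) := by
    calc 2 ^ ((p:ℝ)/2) * Real.Gamma ((p:ℝ)/2) * 1
        ≤ 2 ^ ((p:ℝ)/2) * Real.Gamma ((p:ℝ)/2) * (Nat.factorial k) := by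
          exact mul_le_mul_of_nonneg_left hfac (by positivity)
      _ ≤ _ := Ck_lb p hp k
  have hfrac : y ^ k * Real.exp (-y/2) / (2 ^ (((p:ℝ) + 2*k)/2) * Real.Gamma (((p:ℝ) + 2*k)/2))
      ≤ 1 / (2 ^ ((p:ℝ)/2) * Real.Gamma ((p:ℝ)/2)) := by
    rw [div_le_div_iff₀ hC (by positivity), one_mul]
    calc y ^ k * Real.exp (-y/2) * (2 ^ ((p:ℝ)/2) * Real.Gamma ((p:ℝ)/2))
        ≤ 1 * (2 ^ ((p:ℝ)/2) * Real.Gamma ((p:ℝ)/2)) := by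
          exact mul_le_mul_of_nonneg_right hnum (by positivity)
      _ = 2 ^ ((p:ℝ)/2) * Real.Gamma ((p:ℝ)/2) * 1 := by ring
      _ ≤ _ := hden
    
  calc Real.exp (-lam/2) * (lam/2) ^ k / (Nat.factorial k) *
      (y ^ k * Real.exp (-y/2) / (2 ^ (((p:ℝ) + 2*k)/2) * Real.Gamma (((p:ℝ) + 2*k)/2)))
      ≤ Real.exp (-lam/2) * (lam/2) ^ k / (Nat.factorial k) * (1 / (2 ^ ((p:ℝ)/2) * Real.Gamma ((p:ℝ)/2))) := by
        exact mul_le_mul_of_nonneg_left hfrac (by positivity)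
    _ = Real.exp (-lam/2) / (2 ^ ((p:ℝ)/2) * Real.Gamma ((p:ℝ)/2)) * ((lam/2) ^ k / (Nat.factorial k)) := by
        ring

lemma gAux_continuousOn (p : ℕ) (hp : 1 ≤ p) (lam : ℝ) (hlam : 0 ≤ lam) :
    ContinuousOn (gAux p lam) (Set.Icc (0:ℝ) 1) := by
  apply continuousOn_tsum (u := fun k => Real.exp (-lam/2) / (2 ^ ((p:ℝ)/2) * Real.Gamma ((p:ℝ)/2)) * ((lam/2) ^ k / (Nat.factorial k)))
  · intro k
    apply Continuous.continuousOn
    have hC := (Ck_pos p hp k).ne'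
    continuity
  · exact (Real.summable_pow_div_factorial (lam/2)).mul_left _
  · intro k y hy
    exact gAux_bound p hp lam hlam k y hy

lemma gAux_zero (p : ℕ) (lam : ℝ) :
    gAux p lam 0 = Real.exp (-lam/2) / (2 ^ ((p:ℝ)/2) * Real.Gamma ((p:ℝ)/2)) := by
  unfold gAux
  rw [tsum_eq_single 0]
  · norm_num
    field_simp
  · intro k hk
    simp [zero_pow hk]

lemma gAux_zero_pos (p : ℕ) (hp : 1 ≤ p) (lam : ℝ) : 0 < gAux p lam 0 := by
  rw [gAux_zero]
  have hG : (0:ℝ) < Real.Gamma ((p:ℝ)/2) := Real.Gamma_pos_of_pos (by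
    have : (1:ℝ) ≤ (p:ℝ) := by exact_mod_cast hp
    positivity)
  positivity

lemma pdf_eq (p : ℕ) (lam : ℝ) (y : ℝ) (hy : 0 < y) :
    ncChiSqPDF p lam y = y ^ ((p:ℝ)/2 - 1) * gAux p lam y := by
  unfold ncChiSqPDF gAux chiSqPDF
  rw [← tsum_mul_left]
  apply tsum_congr
  intro k
  have h1 : ((p:ℝ) + 2*k)/2 - 1 = ((p:ℝ)/2 - 1) + (k:ℝ) := by ring
  rw [h1, Real.rpow_add hy, Real.rpow_natCast]
  ring

lemma key_lemma {g : ℝ → ℝ} {s L : ℝ} (hs : -1 < s)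
    (hcont : ContinuousOn g (Set.Icc (0:ℝ) 1))
    (hlim : Tendsto g (nhdsWithin 0 (Set.Ioi 0)) (nhds L)) :
    Tendsto (fun a : ℝ => (∫ y in Set.Ioc (0:ℝ) a, y ^ s * g y) / a ^ (s+1))
      (nhdsWithin 0 (Set.Ioi 0)) (nhds (L/(s+1))) := by
  have hs1 : 0 < s + 1 := by linarith
  rw [Metric.tendsto_nhdsWithin_nhds] at hlim ⊢
  intro ε hε
  have hε' : 0 < ε * (s+1) / 2 := by positivity
  set ε' := ε * (s+1) / 2 with hε'def
  obtain ⟨δ₁, hδ₁pos, hδ₁⟩ := hlim ε' hε'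
  refine ⟨min δ₁ 1, by positivity, ?_⟩
  intro a ha hadist
  have ha0 : 0 < a := ha
  rw [Real.dist_eq, sub_zero, abs_of_pos ha0] at hadist
  have haδ : a < δ₁ := lt_of_lt_of_le hadist (min_le_left _ _)
  have ha1 : a ≤ 1 := le_of_lt (lt_of_lt_of_le hadist (min_le_right _ _))
  have hA : 0 < a ^ (s+1) := Real.rpow_pos_of_pos ha0 _
  -- bound on g on Ioc 0 a
  have hgb : ∀ y ∈ Set.Ioc (0:ℝ) a, |g y - L| ≤ ε' := by
    intro y hy
    have : dist (g y) L < ε' := hδ₁ hy.1 (by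
      rw [Real.dist_eq, sub_zero, abs_of_pos hy.1]; exact lt_of_le_of_lt hy.2 haδ)
    rw [Real.dist_eq] at this
    exact this.le
  -- integrability
  have hI1 : IntegrableOn (fun y => y ^ s) (Set.Ioc 0 a) := by
    have := intervalIntegral.intervalIntegrable_rpow' (a := 0) (b := a) hs
    rwa [intervalIntegrable_iff_integrableOn_Ioc_of_le ha0.le] at this
  have hg_meas : AEStronglyMeasurable g (volume.restrict (Set.Ioc 0 a)) := by
    apply ContinuousOn.aestronglyMeasurable (hcont.mono ?_) measurableSet_Ioc
    intro y hy
    exact ⟨hy.1.le, le_trans hy.2 ha1⟩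
  have hgbd : ∀ᵐ y ∂(volume.restrict (Set.Ioc 0 a)), ‖g y‖ ≤ |L| + ε' := by
    rw [ae_restrict_iff' measurableSet_Ioc]
    apply ae_of_all
    intro y hy
    have := hgb y hy
    rw [Real.norm_eq_abs]
    calc |g y| = |L + (g y - L)| := by ring_nf
      _ ≤ |L| + |g y - L| := abs_add_le _ _
      _ ≤ |L| + ε' := by linarith
  have hI2 : IntegrableOn (fun y => y ^ s * g y) (Set.Ioc 0 a) := by
    have := hI1.bdd_mul hg_meas hgbd
    apply this.congr
    apply ae_of_all
    intro y
    ring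
  have hI3 : IntegrableOn (fun y => y ^ s * L) (Set.Ioc 0 a) := hI1.mul_const L
  -- value of ∫ y^s
  have hpow : (∫ y in Set.Ioc (0:ℝ) a, y ^ s) = a ^ (s+1) / (s+1) := by
    rw [← intervalIntegral.integral_of_le ha0.le, integral_rpow (Or.inl hs)]
    rw [Real.zero_rpow (ne_of_gt hs1)]
    ring
  have hLpart : (∫ y in Set.Ioc (0:ℝ) a, y ^ s * L) = L * (a ^ (s+1) / (s+1)) := by
    rw [integral_mul_const, hpow]; ring
  -- main estimate
  have hdiff : |(∫ y in Set.Ioc (0:ℝ) a, y ^ s * g y) - L * (a ^ (s+1)/(s+1))|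
      ≤ ε' * (a ^ (s+1)/(s+1)) := by
    rw [← hLpart, ← integral_sub hI2 hI3]
    have h1 : |∫ y in Set.Ioc (0:ℝ) a, (y ^ s * g y - y ^ s * L)|
        ≤ ∫ y in Set.Ioc (0:ℝ) a, |y ^ s * g y - y ^ s * L| := by
      simpa [Real.norm_eq_abs] using
        norm_integral_le_integral_norm (μ := volume.restrict (Set.Ioc 0 a))
          (fun y => y ^ s * g y - y ^ s * L)
    refine le_trans h1 ?_
    have h2 : (∫ y in Set.Ioc (0:ℝ) a, |y ^ s * g y - y ^ s * L|)
        ≤ ∫ y in Set.Ioc (0:ℝ) a, y ^ s * ε' := by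
      apply setIntegral_mono_on ((hI2.sub hI3).abs) (hI1.mul_const ε') measurableSet_Ioc
      intro y hy
      have hys : 0 ≤ y ^ s := Real.rpow_nonneg hy.1.le _
      calc |y ^ s * g y - y ^ s * L| = y ^ s * |g y - L| := by
            rw [← mul_sub, abs_mul, abs_of_nonneg hys]
        _ ≤ y ^ s * ε' := mul_le_mul_of_nonneg_left (hgb y hy) hys
    refine le_trans h2 ?_
    rw [integral_mul_const, hpow]
    ring_nf
    exact le_refl _
  -- conclude
  rw [Real.dist_eq]
  have heq : (∫ y in Set.Ioc (0:ℝ) a, y ^ s * g y) / a ^ (s+1) - L/(s+1)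
      = ((∫ y in Set.Ioc (0:ℝ) a, y ^ s * g y) - L * (a ^ (s+1)/(s+1))) / a ^ (s+1) := by
    field_simp
  rw [heq, abs_div, abs_of_pos hA, div_lt_iff₀ hA]
  calc |(∫ y in Set.Ioc (0:ℝ) a, y ^ s * g y) - L * (a ^ (s+1)/(s+1))|
      ≤ ε' * (a ^ (s+1)/(s+1)) := hdiff
    _ = (ε/2) * a ^ (s+1) := by rw [hε'def]; field_simp
    _ < ε * a ^ (s+1) := by
        have : (0:ℝ) < ε * a^(s+1) / 2 := by positivity
        nlinarith

lemma alg_lemma (N D a x1 x2 P : ℝ) (hx2 : x2 = x1 * a) (hx1 : x1 ≠ 0) (ha : a ≠ 0)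
    (hP : (P:ℝ) ≠ 0) (hP2 : P + 2 ≠ 0) :
    (N/x2)/(D/x1) * ((P+2)/P) = (N/D)/(P*a/(P+2)) := by
  by_cases hD : D = 0
  · simp [hD]
  · rw [hx2]
    field_simp

/-- As `a ↓ 0`, `E(M ∣ M < a) ~ p a / (p + 2)` for `M ~ χ²_p(λ)`. -/
theorem ncChiSq_condExp_asymptotic (p : ℕ) (hp : 1 ≤ p) (lam : ℝ) (hlam : 0 ≤ lam) :
    Tendsto (fun a : ℝ => ncChiSqCondExp p lam a / ((p : ℝ) * a / ((p : ℝ) + 2)))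
      (nhdsWithin 0 (Set.Ioi 0)) (nhds 1) := by
  have hp1 : (1:ℝ) ≤ (p:ℝ) := by exact_mod_cast hp
  set s : ℝ := (p:ℝ)/2 - 1 with hsdef
  have hs : -1 < s := by rw [hsdef]; linarith
  have hs' : -1 < s + 1 := by linarith
  have hs1 : 0 < s + 1 := by linarith
  have hcont := gAux_continuousOn p hp lam hlam
  set L := gAux p lam 0 with hLdef
  have hL : 0 < L := gAux_zero_pos p hp lam
  have hlim : Tendsto (gAux p lam) (nhdsWithin 0 (Set.Ioi 0)) (nhds L) := by
    have h1 : ContinuousWithinAt (gAux p lam) (Set.Icc 0 1) 0 :=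
      hcont.continuousWithinAt (by constructor <;> norm_num)
    refine h1.mono_left (nhdsWithin_le_iff.mpr ?_)
    exact mem_of_superset (Ioc_mem_nhdsGT_of_mem (by constructor <;> norm_num))
      Set.Ioc_subset_Icc_self
  have TD := key_lemma hs hcont hlim
  have TN := key_lemma hs' hcont hlim
  have hLs : L / (s+1) ≠ 0 := by positivity
  have hdiv := (TN.div TD hLs).mul_const (((p:ℝ)+2)/(p:ℝ))
  have hval : (L/(s+1+1))/(L/(s+1)) * (((p:ℝ)+2)/(p:ℝ)) = 1 := by
    have hp0 : (p:ℝ) ≠ 0 := by linarith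
    have h2 : s + 1 + 1 ≠ 0 := by linarith
    have h3 : (p:ℝ) + 2 ≠ 0 := by linarith
    rw [hsdef]
    field_simp
    ring_nf
    field_simp
  rw [hval] at hdiv
  apply hdiv.congr'
  filter_upwards [self_mem_nhdsWithin] with a ha
  have ha0 : (0:ℝ) < a := ha
  have hCDF : ncChiSqCDF p lam a = ∫ y in Set.Ioc (0:ℝ) a, y ^ s * gAux p lam y := by
    rw [ncChiSqCDF, intervalIntegral.integral_of_le ha0.le]
    exact setIntegral_congr_fun measurableSet_Ioc (fun y hy => pdf_eq p lam y hy.1)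
  have hNum : (∫ y in (0:ℝ)..a, y * ncChiSqPDF p lam y)
      = ∫ y in Set.Ioc (0:ℝ) a, y ^ (s+1) * gAux p lam y := by
    rw [intervalIntegral.integral_of_le ha0.le]
    apply setIntegral_congr_fun measurableSet_Ioc
    intro y hy
    show y * ncChiSqPDF p lam y = y ^ (s+1) * gAux p lam y
    rw [pdf_eq p lam y hy.1, Real.rpow_add_one hy.1.ne']
    ring
  have hA1 : (0:ℝ) < a ^ (s+1) := Real.rpow_pos_of_pos ha0 _
  have hA2 : a ^ (s+1+1) = a ^ (s+1) * a := Real.rpow_add_one ha0.ne' _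
  have hp0 : (p:ℝ) ≠ 0 := by linarith
  have h3 : (p:ℝ) + 2 ≠ 0 := by linarith
  simp only [Pi.div_apply]
  rw [ncChiSqCondExp, hCDF, hNum]
  exact alg_lemma _ _ a _ _ _ hA2 hA1.ne' ha0.ne' hp0 h3
end

section
/- Let $Y_1, Y_2$ be independent standard normal random variables and $\alpha_1, \alpha_2 > 0$. Then $\lim_{c \downarrow 0} E\left(Y_1^2 \mid (\alpha_1 Y_1 + \alpha_2 Y_2)^2 < c\right) = \alpha_2^2/(\alpha_1^2 + \alpha_2^2)$. -/
open MeasureTheory ProbabilityTheory Filter Real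

open scoped NNReal ENNReal
section Calc

lemma integrable_sq_mul_exp_neg_mul_sq {b : ℝ} (hb : 0 < b) :
    Integrable (fun x : ℝ => x ^ 2 * Real.exp (-b * x ^ 2)) := by
  refine ((integrable_exp_neg_mul_sq (b := b/2) (by linarith)).const_mul (2/b)).mono' ?_ ?_
  · exact (((measurable_id.pow_const 2).mul (((measurable_id.pow_const 2).const_mul (-b)).exp)).aestronglyMeasurable)
  · filter_upwards with x
    have h1 : (b/2) * x^2 ≤ Real.exp ((b/2)*x^2) := by
      have := Real.add_one_le_exp ((b/2)*x^2); linarith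
    have h2 : x^2 ≤ (2/b) * Real.exp ((b/2)*x^2) := by
      have hb' : (0:ℝ) < 2/b := by positivity
      rw [← sub_nonneg]
      have : (2/b) * Real.exp ((b/2)*x^2) - x^2 = (2/b) * (Real.exp ((b/2)*x^2) - (b/2)*x^2) := by
        field_simp
      rw [this]
      have := sub_nonneg.mpr h1
      positivity
    have h3 : Real.exp ((b/2)*x^2) * Real.exp (-b*x^2) = Real.exp (-(b/2) * x^2) := by
      rw [← Real.exp_add]; ring_nf
    calc ‖x^2 * Real.exp (-b*x^2)‖ = x^2 * Real.exp (-b*x^2) := by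
          rw [Real.norm_eq_abs, abs_of_nonneg (by positivity)]
      _ ≤ ((2/b) * Real.exp ((b/2)*x^2)) * Real.exp (-b*x^2) := by
          exact mul_le_mul_of_nonneg_right h2 (Real.exp_pos _).le
      _ = 2/b * Real.exp (-(b/2) * x^2) := by rw [mul_assoc, h3]

lemma integral_sq_mul_exp_neg_mul_sq {b : ℝ} (hb : 0 < b) :
    ∫ x : ℝ, x ^ 2 * Real.exp (-b * x ^ 2) = Real.sqrt (π / b) / (2*b) := by
  have hderiv : ∀ x : ℝ, HasDerivAt (fun x : ℝ => x * Real.exp (-b * x^2))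
      (Real.exp (-b*x^2) - 2*b*(x^2 * Real.exp (-b*x^2))) x := by
    intro x
    have h1 : HasDerivAt (fun x : ℝ => -b * x^2) (-b * (2*x)) x := by
      simpa using ((hasDerivAt_pow 2 x).const_mul (-b))
    have h2 := h1.exp
    have h3 := (hasDerivAt_id x).mul h2
    simp only [id] at h3
    exact h3.congr_deriv (by ring)
  have hint : Integrable (fun x : ℝ => Real.exp (-b*x^2) - 2*b*(x^2 * Real.exp (-b*x^2))) :=
    (integrable_exp_neg_mul_sq hb).sub ((integrable_sq_mul_exp_neg_mul_sq hb).const_mul (2*b))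
  have h0 := integral_eq_zero_of_hasDerivAt_of_integrable hderiv hint
    (integrable_mul_exp_neg_mul_sq hb)
  rw [integral_sub (integrable_exp_neg_mul_sq hb)
    ((integrable_sq_mul_exp_neg_mul_sq hb).const_mul (2*b)), integral_const_mul,
    integral_gaussian] at h0
  have hbne : (2*b) ≠ 0 := by positivity
  field_simp at h0 ⊢
  linarith

lemma integral_self_mul_exp_neg_mul_sq {b : ℝ} (hb : 0 < b) :
    ∫ x : ℝ, x * Real.exp (-b * x ^ 2) = 0 := by
  have hderiv : ∀ x : ℝ, HasDerivAt (fun x : ℝ => -(2*b)⁻¹ * Real.exp (-b * x^2))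
      (x * Real.exp (-b*x^2)) x := by
    intro x
    have h1 : HasDerivAt (fun x : ℝ => -b * x^2) (-b * (2*x)) x := by
      simpa using ((hasDerivAt_pow 2 x).const_mul (-b))
    have h2 := h1.exp.const_mul (-(2*b)⁻¹)
    exact h2.congr_deriv (by field_simp)
  exact integral_eq_zero_of_hasDerivAt_of_integrable hderiv (integrable_mul_exp_neg_mul_sq hb)
    ((integrable_exp_neg_mul_sq hb).const_mul _)

end Calc

section Gauss
variable {v : ℝ≥0}

lemma gaussianReal_eq_withDensity (m : ℝ) (hv : v ≠ 0) :
    gaussianReal m v = volume.withDensity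
      (fun x => ((gaussianPDFReal m v x).toNNReal : ℝ≥0∞)) := by
  rw [gaussianReal_of_var_ne_zero m hv]
  rfl

lemma gaussianPDFReal_zero_eq (hv : v ≠ 0) (x : ℝ) :
    gaussianPDFReal 0 v x = (Real.sqrt (2*π*v))⁻¹ * Real.exp (-(2*(v:ℝ))⁻¹ * x^2) := by
  rw [gaussianPDFReal]
  congr 1
  rw [sub_zero]
  congr 1
  have hv' : (0:ℝ) < v := lt_of_le_of_ne (v.coe_nonneg) (by exact_mod_cast (Ne.symm hv))
  field_simp

lemma integral_fun_gaussianReal (hv : v ≠ 0) (g : ℝ → ℝ) :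
    ∫ x, g x ∂(gaussianReal 0 v) = ∫ x, gaussianPDFReal 0 v x * g x := by
  rw [gaussianReal_eq_withDensity 0 hv,
    integral_withDensity_eq_integral_smul ((measurable_gaussianPDFReal 0 v).real_toNNReal) g]
  congr 1 with x
  rw [NNReal.smul_def, smul_eq_mul, Real.coe_toNNReal _ (gaussianPDFReal_nonneg 0 v x)]

lemma integrable_fun_gaussianReal (hv : v ≠ 0) (g : ℝ → ℝ)
    (h : Integrable (fun x => gaussianPDFReal 0 v x * g x)) :
    Integrable g (gaussianReal 0 v) := by
  rw [gaussianReal_eq_withDensity 0 hv,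
    integrable_withDensity_iff_integrable_smul ((measurable_gaussianPDFReal 0 v).real_toNNReal)]
  refine h.congr (Filter.Eventually.of_forall fun x => ?_)
  dsimp only
  rw [NNReal.smul_def, smul_eq_mul, Real.coe_toNNReal _ (gaussianPDFReal_nonneg 0 v x)]

lemma vpos (hv : v ≠ 0) : (0:ℝ) < (v:ℝ) :=
  lt_of_le_of_ne (v.coe_nonneg) (by exact_mod_cast (Ne.symm hv))

lemma bpos (hv : v ≠ 0) : (0:ℝ) < (2*(v:ℝ))⁻¹ := by
  have := vpos hv; positivity

lemma integrable_id_gaussianReal' (hv : v ≠ 0) :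
    Integrable (fun x : ℝ => x) (gaussianReal 0 v) := by
  refine integrable_fun_gaussianReal hv _ ?_
  have h := (integrable_mul_exp_neg_mul_sq (bpos hv)).const_mul (Real.sqrt (2*π*v))⁻¹
  refine h.congr (Filter.Eventually.of_forall fun x => ?_)
  dsimp only
  rw [gaussianPDFReal_zero_eq hv]
  ring

lemma integrable_sq_gaussianReal' (hv : v ≠ 0) :
    Integrable (fun x : ℝ => x^2) (gaussianReal 0 v) := by
  refine integrable_fun_gaussianReal hv _ ?_
  have h := (integrable_sq_mul_exp_neg_mul_sq (bpos hv)).const_mul (Real.sqrt (2*π*v))⁻¹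
  refine h.congr (Filter.Eventually.of_forall fun x => ?_)
  dsimp only
  rw [gaussianPDFReal_zero_eq hv]
  ring

lemma integral_id_gaussianReal' (hv : v ≠ 0) :
    ∫ x, x ∂(gaussianReal 0 v) = 0 := by
  rw [integral_fun_gaussianReal hv]
  have : (fun x => gaussianPDFReal 0 v x * x)
      = fun x => (Real.sqrt (2*π*v))⁻¹ * (x * Real.exp (-(2*(v:ℝ))⁻¹ * x^2)) := by
    funext x; rw [gaussianPDFReal_zero_eq hv]; ring
  rw [this, integral_const_mul, integral_self_mul_exp_neg_mul_sq (bpos hv), mul_zero]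

lemma integral_sq_gaussianReal' (hv : v ≠ 0) :
    ∫ x, x^2 ∂(gaussianReal 0 v) = (v:ℝ) := by
  rw [integral_fun_gaussianReal hv]
  have : (fun x => gaussianPDFReal 0 v x * x^2)
      = fun x => (Real.sqrt (2*π*v))⁻¹ * (x^2 * Real.exp (-(2*(v:ℝ))⁻¹ * x^2)) := by
    funext x; rw [gaussianPDFReal_zero_eq hv]; ring
  rw [this, integral_const_mul, integral_sq_mul_exp_neg_mul_sq (bpos hv)]
  have hv' := vpos hv
  have h1 : π / (2*(v:ℝ))⁻¹ = 2*π*(v:ℝ) := by field_simp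
  rw [h1]
  have h2 : Real.sqrt (2*π*(v:ℝ)) ≠ 0 := by
    refine Real.sqrt_ne_zero'.mpr ?_
    positivity
  have h3 : Real.sqrt (2*π*(v:ℝ)) * Real.sqrt (2*π*(v:ℝ)) = 2*π*(v:ℝ) :=
    Real.mul_self_sqrt (by positivity)
  field_simp

end Gauss
section MeasureLemmas

open scoped ENNReal

variable {α β : Type*} [MeasurableSpace α] [MeasurableSpace β]

lemma map_withDensity_measurableEquiv (e : α ≃ᵐ β) (μ : Measure α) {f : α → ℝ≥0∞}
    (hf : Measurable f) :
    (μ.withDensity f).map e = (μ.map e).withDensity (fun y => f (e.symm y)) := by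
  ext s hs
  rw [Measure.map_apply e.measurable hs, withDensity_apply _ (e.measurable hs),
    withDensity_apply _ hs,
    setLIntegral_map (f := fun y => f (e.symm y)) hs (hf.comp e.symm.measurable) e.measurable]
  refine setLIntegral_congr_fun (e.measurable hs) (fun x _ => ?_)
  simp

lemma smul_withDensity {c : ℝ≥0∞} (hc : c ≠ ⊤) (μ : Measure α) (f : α → ℝ≥0∞) :
    (c • μ).withDensity f = μ.withDensity (fun x => c * f x) := by
  ext s hs
  rw [withDensity_apply _ hs, withDensity_apply _ hs, Measure.restrict_smul,
    lintegral_smul_measure, lintegral_const_mul' _ _ hc, smul_eq_mul]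

lemma gaussianReal_prod_gaussianReal {v w : ℝ≥0} (hv : v ≠ 0) (hw : w ≠ 0) :
    (gaussianReal 0 v).prod (gaussianReal 0 w) = (volume : Measure (ℝ × ℝ)).withDensity
      (fun p => gaussianPDF 0 v p.1 * gaussianPDF 0 w p.2) := by
  refine Measure.prod_eq fun s t hs ht => ?_
  rw [withDensity_apply _ (hs.prod ht), Measure.volume_eq_prod, ← Measure.prod_restrict,
    lintegral_prod_mul (measurable_gaussianPDF 0 v).aemeasurable
      (measurable_gaussianPDF 0 w).aemeasurable,
    gaussianReal_apply 0 hv s, gaussianReal_apply 0 hw t]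

end MeasureLemmas
section Rotation

open scoped ENNReal

variable {a b : ℝ}

/-- The rotation-scaling as a measurable equiv. -/
noncomputable def rotEquiv (a b : ℝ) (ha : 0 < a) (hb : 0 < b) : (ℝ × ℝ) ≃ᵐ (ℝ × ℝ) where
  toFun := fun p => (a*p.1 + b*p.2, b*p.1 - a*p.2)
  invFun := fun p => ((a*p.1 + b*p.2)/(a^2+b^2), (b*p.1 - a*p.2)/(a^2+b^2))
  left_inv := by
    intro p
    have hr : a^2+b^2 ≠ 0 := by positivity
    ext <;> dsimp <;> field_simp <;> ring
  right_inv := by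
    intro p
    have hr : a^2+b^2 ≠ 0 := by positivity
    ext <;> dsimp <;> field_simp <;> ring
  measurable_toFun := by dsimp; fun_prop
  measurable_invFun := by dsimp; fun_prop

lemma volume_map_rotEquiv (ha : 0 < a) (hb : 0 < b) :
    (volume : Measure (ℝ × ℝ)).map (rotEquiv a b ha hb)
      = ENNReal.ofReal (a^2+b^2)⁻¹ • volume := by
  have hr : (0:ℝ) < a^2+b^2 := by positivity
  set L : (ℝ × ℝ) →ₗ[ℝ] (ℝ × ℝ) := LinearMap.prod
      (a • LinearMap.fst ℝ ℝ ℝ + b • LinearMap.snd ℝ ℝ ℝ)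
      (b • LinearMap.fst ℝ ℝ ℝ - a • LinearMap.snd ℝ ℝ ℝ) with hL
  have hdet : LinearMap.det L = -(a^2+b^2) := by
    rw [hL, ← LinearMap.det_toMatrix (Module.Basis.finTwoProd ℝ), Matrix.det_fin_two]
    simp [LinearMap.toMatrix_apply, Module.Basis.finTwoProd]
    ring
  have hcoe : ⇑(rotEquiv a b ha hb) = ⇑L := by
    funext p
    simp [rotEquiv, hL, LinearMap.prod_apply]
  rw [hcoe, Measure.map_linearMap_addHaar_eq_smul_addHaar _
    (by rw [hdet]; exact ne_of_lt (by linarith))]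
  congr 1
  rw [hdet]
  rw [inv_neg, abs_neg,
    abs_of_nonneg (by positivity)]

end Rotation
section RotGauss

open scoped ENNReal NNReal

variable {a b : ℝ}

lemma exp_combine (s A B : ℝ) :
    (s⁻¹ * Real.exp A) * (s⁻¹ * Real.exp B) = (s*s)⁻¹ * Real.exp (A+B) := by
  rw [Real.exp_add]; ring

lemma pdf_rot_identity (ha : 0 < a) (hb : 0 < b) (u w : ℝ) :
    (a^2+b^2)⁻¹ * (gaussianPDFReal 0 1 ((a*u+b*w)/(a^2+b^2))
        * gaussianPDFReal 0 1 ((b*u-a*w)/(a^2+b^2)))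
      = gaussianPDFReal 0 (a^2+b^2).toNNReal u * gaussianPDFReal 0 (a^2+b^2).toNNReal w := by
  have hr : (0:ℝ) < a^2+b^2 := by positivity
  have hv : (a^2+b^2).toNNReal ≠ 0 := by
    simp only [ne_eq, Real.toNNReal_eq_zero, not_le]; exact hr
  have hvr : (((a^2+b^2).toNNReal : ℝ≥0) : ℝ) = a^2+b^2 := Real.coe_toNNReal _ hr.le
  rw [gaussianPDFReal_zero_eq (one_ne_zero), gaussianPDFReal_zero_eq (one_ne_zero),
    gaussianPDFReal_zero_eq hv, gaussianPDFReal_zero_eq hv]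
  simp only [hvr, NNReal.coe_one]
  rw [exp_combine, exp_combine,
    Real.mul_self_sqrt (by positivity : (0:ℝ) ≤ 2*π*1),
    Real.mul_self_sqrt (by positivity : (0:ℝ) ≤ 2*π*(a^2+b^2)),
    show (-(2*(1:ℝ))⁻¹ * ((a*u+b*w)/(a^2+b^2))^2 + -(2*(1:ℝ))⁻¹ * ((b*u-a*w)/(a^2+b^2))^2)
        = (-(2*(a^2+b^2))⁻¹ * u^2 + -(2*(a^2+b^2))⁻¹ * w^2) by field_simp; ring,
    ← mul_assoc]
  congr 1
  have hpi := Real.pi_pos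
  field_simp

lemma map_rot_gaussian (ha : 0 < a) (hb : 0 < b) :
    ((gaussianReal 0 1).prod (gaussianReal 0 1)).map
      (fun p : ℝ × ℝ => (a*p.1 + b*p.2, b*p.1 - a*p.2))
    = (gaussianReal 0 (a^2+b^2).toNNReal).prod (gaussianReal 0 (a^2+b^2).toNNReal) := by
  have hr : (0:ℝ) < a^2+b^2 := by positivity
  have hv : (a^2+b^2).toNNReal ≠ 0 := by
    simp only [ne_eq, Real.toNNReal_eq_zero, not_le]; exact hr
  have hco : (fun p : ℝ × ℝ => (a*p.1 + b*p.2, b*p.1 - a*p.2)) = ⇑(rotEquiv a b ha hb) := rfl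
  have hF : Measurable (fun p : ℝ × ℝ => gaussianPDF 0 1 p.1 * gaussianPDF 0 1 p.2) :=
    ((measurable_gaussianPDF 0 1).comp measurable_fst).mul
      ((measurable_gaussianPDF 0 1).comp measurable_snd)
  rw [hco, gaussianReal_prod_gaussianReal one_ne_zero one_ne_zero,
    map_withDensity_measurableEquiv (rotEquiv a b ha hb) volume hF,
    volume_map_rotEquiv ha hb,
    smul_withDensity ENNReal.ofReal_ne_top volume,
    gaussianReal_prod_gaussianReal hv hv]
  congr 1
  funext p
  have hsymm : (rotEquiv a b ha hb).symm p
      = ((a*p.1 + b*p.2)/(a^2+b^2), (b*p.1 - a*p.2)/(a^2+b^2)) := rfl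
  rw [hsymm]
  simp only [gaussianPDF]
  rw [← ENNReal.ofReal_mul (gaussianPDFReal_nonneg 0 1 _),
    ← ENNReal.ofReal_mul (by positivity : (0:ℝ) ≤ (a^2+b^2)⁻¹),
    ← ENNReal.ofReal_mul (gaussianPDFReal_nonneg 0 _ _)]
  exact congrArg ENNReal.ofReal (pdf_rot_identity ha hb p.1 p.2)

end RotGauss
open scoped NNReal ENNReal in
/-- For independent standard normals `Y₁, Y₂` and `α₁, α₂ > 0`,
`lim_{c ↓ 0} E(Y₁² ∣ (α₁Y₁ + α₂Y₂)² < c) = α₂²/(α₁² + α₂²)`. -/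
theorem condExp_sq_given_weighted_sum_sq_lt_limit {Ω : Type*} [MeasurableSpace Ω]
    (μ : Measure Ω) [IsProbabilityMeasure μ]
    (Y₁ Y₂ : Ω → ℝ) (hY₁ : Measurable Y₁) (hY₂ : Measurable Y₂)
    (hlaw₁ : μ.map Y₁ = gaussianReal 0 1) (hlaw₂ : μ.map Y₂ = gaussianReal 0 1)
    (hindep : IndepFun Y₁ Y₂ μ)
    (α₁ α₂ : ℝ) (hα₁ : 0 < α₁) (hα₂ : 0 < α₂) :
    Tendsto (fun c : ℝ =>
        (∫ ω in {ω | (α₁ * Y₁ ω + α₂ * Y₂ ω)^2 < c}, (Y₁ ω)^2 ∂μ) /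
          (μ {ω | (α₁ * Y₁ ω + α₂ * Y₂ ω)^2 < c}).toReal)
      (nhdsWithin 0 (Set.Ioi 0)) (nhds (α₂^2 / (α₁^2 + α₂^2))) := by
  have hr : (0:ℝ) < α₁^2 + α₂^2 := by positivity
  set r2 : ℝ := α₁^2 + α₂^2 with hr2def
  set v : ℝ≥0 := r2.toNNReal with hvdef
  have hv : v ≠ 0 := by
    simp only [hvdef, ne_eq, Real.toNNReal_eq_zero, not_le]; exact hr
  have hvr : ((v : ℝ≥0) : ℝ) = r2 := Real.coe_toNNReal _ hr.le
  set ν : Measure ℝ := gaussianReal 0 v with hνdef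
  -- the joint law
  have hjoint : μ.map (fun ω => (Y₁ ω, Y₂ ω)) = (gaussianReal 0 1).prod (gaussianReal 0 1) := by
    exact ((indepFun_iff_map_prod_eq_prod_map_map hY₁.aemeasurable hY₂.aemeasurable).mp
      hindep).trans (by rw [hlaw₁, hlaw₂])
  set φ : Ω → ℝ × ℝ := fun ω => (α₁*Y₁ ω + α₂*Y₂ ω, α₂*Y₁ ω - α₁*Y₂ ω) with hφdef
  have hφ : Measurable φ := by
    apply Measurable.prodMk <;> fun_prop
  have hmap : μ.map φ = ν.prod ν := by
    have hcomp : φ = (fun p : ℝ × ℝ => (α₁*p.1 + α₂*p.2, α₂*p.1 - α₁*p.2))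
        ∘ (fun ω => (Y₁ ω, Y₂ ω)) := rfl
    rw [hcomp, ← Measure.map_map (by fun_prop) (hY₁.prodMk hY₂), hjoint,
      map_rot_gaussian hα₁ hα₂]
  have hBs : ∀ c : ℝ, MeasurableSet {s : ℝ | s^2 < c} := fun c =>
    measurableSet_lt (measurable_id.pow_const 2) measurable_const
  have hBmeas : ∀ c : ℝ, MeasurableSet {p : ℝ × ℝ | p.1^2 < c} := fun c =>
    measurableSet_lt (measurable_fst.pow_const 2) measurable_const
  have hBprod : ∀ c : ℝ, {p : ℝ × ℝ | p.1^2 < c} = {s : ℝ | s^2 < c} ×ˢ Set.univ := by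
    intro c; ext p; simp [Set.mem_prod]
  have hA : ∀ c : ℝ, {ω | (α₁ * Y₁ ω + α₂ * Y₂ ω)^2 < c} = φ ⁻¹' {p : ℝ × ℝ | p.1^2 < c} :=
    fun c => rfl
  -- denominator
  have hden : ∀ c : ℝ, μ {ω | (α₁ * Y₁ ω + α₂ * Y₂ ω)^2 < c} = ν {s : ℝ | s^2 < c} := by
    intro c
    rw [hA, ← Measure.map_apply hφ (hBmeas c), hmap, hBprod, Measure.prod_prod,
      measure_univ, mul_one]
  set N : ℝ → ℝ := fun c => ∫ s in {s : ℝ | s^2 < c}, s^2 ∂ν with hNdef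
  set D : ℝ → ℝ := fun c => (ν {s : ℝ | s^2 < c}).toReal with hDdef
  -- numerator
  have hnum : ∀ c : ℝ, (∫ ω in {ω | (α₁ * Y₁ ω + α₂ * Y₂ ω)^2 < c}, (Y₁ ω)^2 ∂μ)
      = (α₁^2 * N c + α₂^2 * r2 * D c) / r2^2 := by
    intro c
    have hg : AEStronglyMeasurable (fun p : ℝ × ℝ => ((α₁*p.1 + α₂*p.2)/r2)^2) (μ.map φ) := by
      apply Measurable.aestronglyMeasurable; fun_prop
    have step1 : (∫ ω in {ω | (α₁ * Y₁ ω + α₂ * Y₂ ω)^2 < c}, (Y₁ ω)^2 ∂μ)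
        = ∫ p in {p : ℝ × ℝ | p.1^2 < c}, ((α₁*p.1 + α₂*p.2)/r2)^2 ∂(ν.prod ν) := by
      rw [← hmap, setIntegral_map (hBmeas c) hg hφ.aemeasurable, ← hA]
      refine (setIntegral_congr_fun (by rw [hA]; exact hφ (hBmeas c)) fun ω _ => ?_).symm
      have hcollapse : α₁*(α₁*Y₁ ω + α₂*Y₂ ω) + α₂*(α₂*Y₁ ω - α₁*Y₂ ω) = r2 * Y₁ ω := by
        rw [hr2def]; ring
      show ((α₁*(φ ω).1 + α₂*(φ ω).2)/r2)^2 = (Y₁ ω)^2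
      rw [hφdef]
      dsimp only
      rw [hcollapse, mul_div_cancel_left₀ _ hr.ne']
    rw [step1, hBprod]
    have hi1 : IntegrableOn (fun z : ℝ × ℝ => (α₁^2/r2^2 * z.1^2) * (1:ℝ))
        ({s : ℝ | s^2 < c} ×ˢ Set.univ) (ν.prod ν) := by
      rw [IntegrableOn, ← Measure.prod_restrict]
      exact (((integrable_sq_gaussianReal' hv).const_mul _).restrict).mul_prod
        ((integrable_const 1).restrict)
    have hi2 : IntegrableOn (fun z : ℝ × ℝ => (2*α₁*α₂/r2^2 * z.1) * z.2)
        ({s : ℝ | s^2 < c} ×ˢ Set.univ) (ν.prod ν) := by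
      rw [IntegrableOn, ← Measure.prod_restrict]
      exact (((integrable_id_gaussianReal' hv).const_mul _).restrict).mul_prod
        ((integrable_id_gaussianReal' hv).restrict)
    have hi3 : IntegrableOn (fun z : ℝ × ℝ => (α₂^2/r2^2 : ℝ) * z.2^2)
        ({s : ℝ | s^2 < c} ×ˢ Set.univ) (ν.prod ν) := by
      rw [IntegrableOn, ← Measure.prod_restrict]
      exact ((integrable_const (μ := ν.restrict {s : ℝ | s^2 < c}) (α₂^2/r2^2 : ℝ))).mul_prod
        ((integrable_sq_gaussianReal' hv).restrict)
    have hexpand : ∀ z : ℝ × ℝ, ((α₁*z.1 + α₂*z.2)/r2)^2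
        = (α₁^2/r2^2 * z.1^2) * 1 + ((2*α₁*α₂/r2^2 * z.1) * z.2 + (α₂^2/r2^2) * z.2^2) := by
      intro z; field_simp; ring
    calc ∫ p in {s : ℝ | s^2 < c} ×ˢ Set.univ, ((α₁*p.1 + α₂*p.2)/r2)^2 ∂(ν.prod ν)
        = ∫ p in {s : ℝ | s^2 < c} ×ˢ Set.univ,
            ((α₁^2/r2^2 * p.1^2) * 1
              + ((2*α₁*α₂/r2^2 * p.1) * p.2 + (α₂^2/r2^2) * p.2^2)) ∂(ν.prod ν) := by
          exact setIntegral_congr_fun ((hBs c).prod MeasurableSet.univ)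
            fun z _ => hexpand z
      _ = (∫ z in {s : ℝ | s^2 < c} ×ˢ Set.univ, (α₁^2/r2^2 * z.1^2) * (1:ℝ) ∂(ν.prod ν))
            + ((∫ z in {s : ℝ | s^2 < c} ×ˢ Set.univ, (2*α₁*α₂/r2^2 * z.1) * z.2 ∂(ν.prod ν))
              + (∫ z in {s : ℝ | s^2 < c} ×ˢ Set.univ,
                  (α₂^2/r2^2 : ℝ) * z.2^2 ∂(ν.prod ν))) := by
          exact (integral_add hi1 (hi2.add hi3)).trans
            (by simp only [Pi.add_apply]; rw [integral_add hi2 hi3])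
      _ = (α₁^2 * N c + α₂^2 * r2 * D c) / r2^2 := by
          have e1 : ∫ z in {s : ℝ | s^2 < c} ×ˢ Set.univ,
              (α₁^2/r2^2 * z.1^2) * (1:ℝ) ∂(ν.prod ν)
              = (∫ s in {s : ℝ | s^2 < c}, α₁^2/r2^2 * s^2 ∂ν) * ∫ t in Set.univ, (1:ℝ) ∂ν :=
            setIntegral_prod_mul (fun s => α₁^2/r2^2 * s^2) (fun _ => (1:ℝ)) _ _
          have e2 : ∫ z in {s : ℝ | s^2 < c} ×ˢ Set.univ,
              (2*α₁*α₂/r2^2 * z.1) * z.2 ∂(ν.prod ν)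
              = (∫ s in {s : ℝ | s^2 < c}, 2*α₁*α₂/r2^2 * s ∂ν) * ∫ t in Set.univ, t ∂ν :=
            setIntegral_prod_mul (fun s => 2*α₁*α₂/r2^2 * s) (fun t => t) _ _
          have e3 : ∫ z in {s : ℝ | s^2 < c} ×ˢ Set.univ,
              (α₂^2/r2^2 : ℝ) * z.2^2 ∂(ν.prod ν)
              = (∫ s in {s : ℝ | s^2 < c}, (α₂^2/r2^2 : ℝ) ∂ν) * ∫ t in Set.univ, t^2 ∂ν :=
            setIntegral_prod_mul (fun _ => (α₂^2/r2^2 : ℝ)) (fun t => t^2) _ _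
          rw [e1, e2, e3, Measure.restrict_univ]
          rw [integral_const, probReal_univ, one_smul,
            integral_id_gaussianReal' hv, mul_zero,
            integral_sq_gaussianReal' hv, hvr,
            integral_const_mul, setIntegral_const]
          rw [hNdef, hDdef]
          dsimp only
          rw [smul_eq_mul, Measure.real]
          field_simp
          ring
  -- positivity of the denominator for c > 0
  have hDpos : ∀ c : ℝ, 0 < c → 0 < D c := by
    intro c hc
    have hsub : Set.Ioo (-Real.sqrt c) (Real.sqrt c) ⊆ {s : ℝ | s^2 < c} := by
      intro s hs
      simp only [Set.mem_setOf_eq]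
      have := sq_lt_sq' hs.1 hs.2
      rwa [Real.sq_sqrt hc.le] at this
    have hne : ν {s : ℝ | s^2 < c} ≠ 0 := by
      intro h0
      have hle : ν (Set.Ioo (-Real.sqrt c) (Real.sqrt c)) = 0 :=
        le_antisymm (h0 ▸ measure_mono hsub) (zero_le ..)
      rw [hνdef, gaussianReal_apply 0 hv _] at hle
      rw [setLIntegral_eq_zero_iff measurableSet_Ioo (measurable_gaussianPDF 0 v)] at hle
      have hIoo : (volume : Measure ℝ) (Set.Ioo (-Real.sqrt c) (Real.sqrt c)) = 0 := by
        rw [measure_eq_zero_iff_ae_notMem]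
        refine hle.mono fun x hx hmem => ?_
        exact absurd (hx hmem) (gaussianPDF_pos 0 hv x).ne'
      rw [Real.volume_Ioo] at hIoo
      have : (0:ℝ) < Real.sqrt c - -Real.sqrt c := by
        have := Real.sqrt_pos.mpr hc; linarith
      simp only [ENNReal.ofReal_eq_zero, not_le] at hIoo
      linarith
    exact ENNReal.toReal_pos hne (measure_ne_top ν _)
  -- bounds on N/D
  have hNb : ∀ c : ℝ, 0 < c → 0 ≤ N c / D c ∧ N c / D c ≤ c := by
    intro c hc
    have hN0 : 0 ≤ N c := setIntegral_nonneg (hBs c) fun s _ => sq_nonneg s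
    have hNle : N c ≤ c * D c := by
      have : N c ≤ ∫ _ in {s : ℝ | s^2 < c}, c ∂ν := by
        refine setIntegral_mono_on ((integrable_sq_gaussianReal' hv).restrict)
          ((integrable_const c).restrict) (hBs c) fun s hs => le_of_lt hs
      rwa [setIntegral_const, smul_eq_mul, mul_comm] at this
    constructor
    · exact div_nonneg hN0 (hDpos c hc).le
    · rw [div_le_iff₀ (hDpos c hc)]; linarith
  -- the key identity for the ratio
  have hkey : ∀ c : ℝ, 0 < c →
      (∫ ω in {ω | (α₁ * Y₁ ω + α₂ * Y₂ ω)^2 < c}, (Y₁ ω)^2 ∂μ) /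
        (μ {ω | (α₁ * Y₁ ω + α₂ * Y₂ ω)^2 < c}).toReal
      = (α₁^2 * (N c / D c) + α₂^2 * r2) / r2^2 := by
    intro c hc
    rw [hnum c, hden c]
    have hD := (hDpos c hc).ne'
    show (α₁^2 * N c + α₂^2 * r2 * D c) / r2^2 / D c = _
    set q : ℝ := N c / D c with hqdef
    have hq : N c = q * D c := by rw [hqdef]; field_simp
    rw [hq]
    field_simp
  -- limit
  have h1 : Tendsto (fun c => N c / D c) (nhdsWithin 0 (Set.Ioi 0)) (nhds 0) := by
    refine tendsto_of_tendsto_of_tendsto_of_le_of_le' tendsto_const_nhds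
      (tendsto_id.mono_left nhdsWithin_le_nhds) ?_ ?_
    · filter_upwards [self_mem_nhdsWithin] with c hc
      exact (hNb c hc).1
    · filter_upwards [self_mem_nhdsWithin] with c hc
      exact (hNb c hc).2
  have h2 : Tendsto (fun c => (α₁^2 * (N c / D c) + α₂^2 * r2) / r2^2)
      (nhdsWithin 0 (Set.Ioi 0)) (nhds ((α₁^2 * 0 + α₂^2 * r2) / r2^2)) :=
    (((h1.const_mul _).add_const _).div_const _)
  have hval : (α₁^2 * 0 + α₂^2 * r2) / r2^2 = α₂^2 / (α₁^2 + α₂^2) := by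
    rw [hr2def]; field_simp; ring
  rw [← hval]
  refine h2.congr' ?_
  filter_upwards [self_mem_nhdsWithin] with c hc
  exact (hkey c hc).symm
end
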